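/- If A and A' are two isomorphic non-degenerate finite-dimensional evolution algebras, then their δ-indices coincide: δ(A) = δ(A'). -/

import Mathlib

open Module

/-- The product of two subspaces: the span of all products `x * y` with `x ∈ P`, `y ∈ Q`. -/
def mulSub {F : Type*} [Field F] {A : Type*} [NonUnitalNonAssocRing A] [Module F A]
    (P Q : Submodule F A) : Submodule F A :=
  Submodule.span F {z | ∃ x ∈ P, ∃ y ∈ Q, z = x * y}

/-- A family of subspaces `E` is a standard extending evolution subspaces decomposition:
`A` is the internal direct sum of the `E k`, each `E k` is spanned by a subset of a
natural basis, `dim (E k)² = 1`, `E j · E k = 0` for `j ≠ k`, and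
`dim ((E j)² + (E k)²) = 2` for `j ≠ k`. -/
def IsStdDecomp {F : Type*} [Field F] {A : Type*} [NonUnitalNonAssocRing A] [Module F A]
    {r : ℕ} (E : Fin r → Submodule F A) : Prop :=
  DirectSum.IsInternal E ∧
  (∀ k, ∃ (m : ℕ) (b : Basis (Fin m) F A),
      (∀ i j : Fin m, i ≠ j → b i * b j = 0) ∧
      ∃ S : Set (Fin m), E k = Submodule.span F (b '' S)) ∧
  (∀ k, finrank F (mulSub (E k) (E k)) = 1) ∧
  (∀ j k, j ≠ k → mulSub (E j) (E k) = ⊥) ∧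
  (∀ j k, j ≠ k → finrank F ↥(mulSub (E j) (E j) ⊔ mulSub (E k) (E k)) = 2)

section Aux
set_option linter.unusedSectionVars false

variable {F : Type*} [Field F] {A : Type*} [NonUnitalNonAssocRing A] [Module F A]
  [SMulCommClass F A A] [IsScalarTower F A A]

lemma mul_mem_mulSub {P Q : Submodule F A} {x y : A} (hx : x ∈ P) (hy : y ∈ Q) :
    x * y ∈ mulSub P Q :=
  Submodule.subset_span ⟨x, hx, y, hy, rfl⟩

lemma mulSub_bot_left (Q : Submodule F A) : mulSub (⊥ : Submodule F A) Q = ⊥ := by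
  rw [mulSub, Submodule.span_eq_bot]
  rintro z ⟨x, hx, y, hy, rfl⟩
  rw [Submodule.mem_bot] at hx
  rw [hx, zero_mul]

/-- The intrinsic subspace attached to a subspace `L`:
all `x` with `x * A ⊆ L` and `A * x ⊆ L`. -/
def Vsub (L : Submodule F A) : Submodule F A where
  carrier := {x | ∀ a : A, x * a ∈ L ∧ a * x ∈ L}
  add_mem' := by
    intro x y hx hy a
    exact ⟨by rw [add_mul]; exact L.add_mem (hx a).1 (hy a).1,
           by rw [mul_add]; exact L.add_mem (hx a).2 (hy a).2⟩
  zero_mem' := by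
    intro a
    simp only [zero_mul, mul_zero]
    exact ⟨L.zero_mem, L.zero_mem⟩
  smul_mem' := by
    intro c x hx a
    exact ⟨by rw [smul_mul_assoc]; exact L.smul_mem c (hx a).1,
           by rw [mul_smul_comm]; exact L.smul_mem c (hx a).2⟩

lemma mem_Vsub {L : Submodule F A} {x : A} :
    x ∈ Vsub L ↔ ∀ a : A, x * a ∈ L ∧ a * x ∈ L := Iff.rfl

/-- Each block of a decomposition is contained in the intrinsic subspace of its square. -/
lemma le_Vsub {r : ℕ} {E : Fin r → Submodule F A} (hsup : ⨆ i, E i = ⊤)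
    (hcross : ∀ j k, j ≠ k → mulSub (E j) (E k) = ⊥) (k : Fin r) :
    E k ≤ Vsub (mulSub (E k) (E k)) := by
  intro x hx a
  have ha : a ∈ ⨆ i, E i := by rw [hsup]; trivial
  refine Submodule.iSup_induction (motive := fun a =>
    x * a ∈ mulSub (E k) (E k) ∧ a * x ∈ mulSub (E k) (E k)) E ha ?_ ?_ ?_
  · intro j y hy
    by_cases hjk : j = k
    · subst hjk; exact ⟨mul_mem_mulSub hx hy, mul_mem_mulSub hy hx⟩
    · constructor
      · have h1 : x * y ∈ mulSub (E k) (E j) := mul_mem_mulSub hx hy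
        rw [hcross k j (Ne.symm hjk), Submodule.mem_bot] at h1
        rw [h1]; exact Submodule.zero_mem _
      · have h1 : y * x ∈ mulSub (E j) (E k) := mul_mem_mulSub hy hx
        rw [hcross j k hjk, Submodule.mem_bot] at h1
        rw [h1]; exact Submodule.zero_mem _
  · simp only [mul_zero, zero_mul]
    exact ⟨Submodule.zero_mem _, Submodule.zero_mem _⟩
  · intro y z hy hz
    exact ⟨by rw [mul_add]; exact Submodule.add_mem _ hy.1 hz.1,
           by rw [add_mul]; exact Submodule.add_mem _ hy.2 hz.2⟩

/-- If `x ∈ Vsub L` decomposes as `∑ c i` along a decomposition whose cross products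
vanish, then any component whose square-line is transverse to `L` vanishes. -/
lemma comp_eq_zero (hnd : ∀ x : A, (∀ a : A, x * a = 0 ∧ a * x = 0) → x = 0)
    {s : ℕ} {E : Fin s → Submodule F A} (hsup : ⨆ i, E i = ⊤)
    (hcross : ∀ j k, j ≠ k → mulSub (E j) (E k) = ⊥)
    {L : Submodule F A} {x : A} (hx : x ∈ Vsub L)
    (c : Fin s → A) (hc : ∀ i, c i ∈ E i) (hsum : x = ∑ i, c i)
    (j : Fin s) (hdisj : L ⊓ mulSub (E j) (E j) = ⊥) : c j = 0 := by
  apply hnd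
  intro a
  have ha : a ∈ ⨆ i, E i := by rw [hsup]; trivial
  refine Submodule.iSup_induction (motive := fun a => c j * a = 0 ∧ a * c j = 0) E ha ?_ ?_ ?_
  · intro m y hy
    by_cases hmj : m = j
    · subst hmj
      have h1 : x * y = c m * y := by
        rw [hsum, Finset.sum_mul]
        refine Finset.sum_eq_single m ?_ ?_
        · intro i _ him
          have h2 : c i * y ∈ mulSub (E i) (E m) := mul_mem_mulSub (hc i) hy
          rw [hcross i m him, Submodule.mem_bot] at h2
          exact h2
        · intro h; exact absurd (Finset.mem_univ m) h
      have h1' : y * x = y * c m := by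
        rw [hsum, Finset.mul_sum]
        refine Finset.sum_eq_single m ?_ ?_
        · intro i _ him
          have h2 : y * c i ∈ mulSub (E m) (E i) := mul_mem_mulSub hy (hc i)
          rw [hcross m i (Ne.symm him), Submodule.mem_bot] at h2
          exact h2
        · intro h; exact absurd (Finset.mem_univ m) h
      constructor
      · have hmem : c m * y ∈ L ⊓ mulSub (E m) (E m) :=
          ⟨h1 ▸ (hx y).1, mul_mem_mulSub (hc m) hy⟩
        rwa [hdisj, Submodule.mem_bot] at hmem
      · have hmem : y * c m ∈ L ⊓ mulSub (E m) (E m) :=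
          ⟨h1' ▸ (hx y).2, mul_mem_mulSub hy (hc m)⟩
        rwa [hdisj, Submodule.mem_bot] at hmem
    · constructor
      · have h2 : c j * y ∈ mulSub (E j) (E m) := mul_mem_mulSub (hc j) hy
        rwa [hcross j m (Ne.symm hmj), Submodule.mem_bot] at h2
      · have h2 : y * c j ∈ mulSub (E m) (E j) := mul_mem_mulSub hy (hc j)
        rwa [hcross m j hmj, Submodule.mem_bot] at h2
  · exact ⟨mul_zero _, zero_mul _⟩
  · intro y z hy hz
    exact ⟨by rw [mul_add, hy.1, hz.1, add_zero], by rw [add_mul, hy.2, hz.2, add_zero]⟩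

/-- Decompose an element along a family whose supremum is everything. -/
lemma exists_decomp {s : ℕ} {E : Fin s → Submodule F A} (hsup : ⨆ i, E i = ⊤) (x : A) :
    ∃ c : Fin s → A, (∀ i, c i ∈ E i) ∧ x = ∑ i, c i := by
  have hx : x ∈ ⨆ i, E i := by rw [hsup]; trivial
  obtain ⟨f, hf, hfsum⟩ := (Submodule.mem_iSup_iff_exists_finsupp E x).mp hx
  refine ⟨fun i => f i, hf, ?_⟩
  rw [← hfsum, Finsupp.sum_fintype]
  intro i; rfl

lemma Vsub_eq_bot (hnd : ∀ x : A, (∀ a : A, x * a = 0 ∧ a * x = 0) → x = 0)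
    {s : ℕ} {E : Fin s → Submodule F A} (hsup : ⨆ i, E i = ⊤)
    (hcross : ∀ j k, j ≠ k → mulSub (E j) (E k) = ⊥)
    {L : Submodule F A} (hdisj : ∀ j, L ⊓ mulSub (E j) (E j) = ⊥) : Vsub L = ⊥ := by
  rw [eq_bot_iff]
  intro x hx
  obtain ⟨c, hc, hsum⟩ := exists_decomp hsup x
  have hz : ∀ j, c j = 0 := fun j => comp_eq_zero hnd hsup hcross hx c hc hsum j (hdisj j)
  rw [Submodule.mem_bot, hsum]
  simp [hz]

/-- Two distinct lines are transverse. -/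
lemma line_inf_bot [FiniteDimensional F A] {P Q : Submodule F A} (h1 : finrank F P = 1)
    (h2 : finrank F Q = 1) (hne : P ≠ Q) : P ⊓ Q = ⊥ := by
  rcases Nat.eq_zero_or_pos (finrank F ↥(P ⊓ Q)) with h | h
  · exact Submodule.finrank_eq_zero.mp h
  · exfalso
    apply hne
    have hP : P ⊓ Q = P := Submodule.eq_of_le_of_finrank_le inf_le_left (by omega)
    have hQ : P ⊓ Q = Q := Submodule.eq_of_le_of_finrank_le inf_le_right (by omega)
    exact hP.symm.trans hQ

/-- The intrinsic subspace of the square-line of a block recovers the block. -/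
lemma Vsub_sq_eq [FiniteDimensional F A]
    (hnd : ∀ x : A, (∀ a : A, x * a = 0 ∧ a * x = 0) → x = 0)
    {s : ℕ} {E : Fin s → Submodule F A} (hsup : ⨆ i, E i = ⊤)
    (h1 : ∀ k, finrank F (mulSub (E k) (E k)) = 1)
    (hcross : ∀ j k, j ≠ k → mulSub (E j) (E k) = ⊥)
    (h2 : ∀ j k, j ≠ k → finrank F ↥(mulSub (E j) (E j) ⊔ mulSub (E k) (E k)) = 2)
    (k : Fin s) : Vsub (mulSub (E k) (E k)) = E k := by
  refine le_antisymm ?_ (le_Vsub hsup hcross k)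
  intro x hx
  obtain ⟨c, hc, hsum⟩ := exists_decomp hsup x
  have hz : ∀ j, j ≠ k → c j = 0 := by
    intro j hjk
    refine comp_eq_zero hnd hsup hcross hx c hc hsum j ?_
    refine line_inf_bot (h1 k) (h1 j) ?_
    intro heq
    have := h2 k j (Ne.symm hjk)
    rw [heq, sup_idem, h1 j] at this
    omega
  have : x = c k := by
    rw [hsum]
    refine Finset.sum_eq_single k (fun i _ hik => hz i hik) ?_
    intro h; exact absurd (Finset.mem_univ k) h
  rw [this]; exact hc k

/-- Uniqueness of the standard decomposition (only the lattice-theoretic parts needed). -/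
lemma std_unique [FiniteDimensional F A]
    (hnd : ∀ x : A, (∀ a : A, x * a = 0 ∧ a * x = 0) → x = 0)
    {r s : ℕ} {D : Fin r → Submodule F A} {D' : Fin s → Submodule F A}
    (hsupD : ⨆ i, D i = ⊤) (h1D : ∀ k, finrank F (mulSub (D k) (D k)) = 1)
    (hcD : ∀ j k, j ≠ k → mulSub (D j) (D k) = ⊥)
    (h2D : ∀ j k, j ≠ k → finrank F ↥(mulSub (D j) (D j) ⊔ mulSub (D k) (D k)) = 2)
    (hsupD' : ⨆ i, D' i = ⊤) (h1D' : ∀ k, finrank F (mulSub (D' k) (D' k)) = 1)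
    (hcD' : ∀ j k, j ≠ k → mulSub (D' j) (D' k) = ⊥)
    (h2D' : ∀ j k, j ≠ k → finrank F ↥(mulSub (D' j) (D' j) ⊔ mulSub (D' k) (D' k)) = 2) :
    ∃ σ : Fin r → Fin s, Function.Injective σ ∧ ∀ k, D k = D' (σ k) := by
  have exists_match : ∀ k : Fin r, ∃ j : Fin s,
      mulSub (D k) (D k) = mulSub (D' j) (D' j) := by
    intro k
    by_contra h
    push_neg at h
    have hdisj : ∀ j, mulSub (D k) (D k) ⊓ mulSub (D' j) (D' j) = ⊥ :=
      fun j => line_inf_bot (h1D k) (h1D' j) (h j)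
    have hbot := Vsub_eq_bot hnd hsupD' hcD' hdisj
    have hk : D k ≤ Vsub (mulSub (D k) (D k)) := le_Vsub hsupD hcD k
    have hDk : D k = ⊥ := le_antisymm (hbot ▸ hk) bot_le
    have := h1D k
    rw [hDk, mulSub_bot_left, finrank_bot] at this
    omega
  choose σ hσ using exists_match
  have hDk : ∀ k, D k = D' (σ k) := by
    intro k
    rw [← Vsub_sq_eq hnd hsupD h1D hcD h2D k, hσ k,
      Vsub_sq_eq hnd hsupD' h1D' hcD' h2D' (σ k)]
  refine ⟨σ, ?_, hDk⟩
  intro k1 k2 h12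
  by_contra hne
  have hsq : mulSub (D k1) (D k1) = mulSub (D k2) (D k2) := by
    rw [hσ k1, hσ k2, h12]
  have := h2D k1 k2 hne
  rw [hsq, sup_idem, h1D k2] at this
  omega

end Aux

section Map

variable {F : Type*} [Field F] {A : Type*} [NonUnitalNonAssocRing A] [Module F A]
  {A' : Type*} [NonUnitalNonAssocRing A'] [Module F A']

lemma mulSub_map (φ : A ≃ₗ[F] A') (hφ : ∀ x y : A, φ (x * y) = φ x * φ y)
    (P Q : Submodule F A) :
    mulSub (P.map (φ : A →ₗ[F] A')) (Q.map (φ : A →ₗ[F] A'))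
      = (mulSub P Q).map (φ : A →ₗ[F] A') := by
  rw [mulSub, mulSub, Submodule.map_span]
  congr 1
  ext z
  constructor
  · rintro ⟨x, ⟨a, ha, rfl⟩, y, ⟨b, hb, rfl⟩, rfl⟩
    exact ⟨a * b, ⟨a, ha, b, hb, rfl⟩, hφ a b⟩
  · rintro ⟨w, ⟨a, ha, b, hb, rfl⟩, rfl⟩
    exact ⟨φ a, ⟨a, ha, rfl⟩, φ b, ⟨b, hb, rfl⟩, hφ a b⟩

end Map

/-- **Isomorphisms respect the standard decomposition.** If `φ : A ≃ A'` is an isomorphism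
of non-degenerate evolution algebras with standard decompositions `E` (length `r`) and
`E'` (length `s`), then `r = s` and there is a permutation `σ` with `dim E k = dim E' (σ k)` (δ-index equality). -/
theorem stmt_3 {F : Type*} [Field F]
    {A : Type*} [NonUnitalNonAssocRing A] [Module F A]
    [SMulCommClass F A A] [IsScalarTower F A A] [FiniteDimensional F A]
    {A' : Type*} [NonUnitalNonAssocRing A'] [Module F A']
    [SMulCommClass F A' A'] [IsScalarTower F A' A'] [FiniteDimensional F A']
    (hnd : ∀ x : A, (∀ a : A, x * a = 0 ∧ a * x = 0) → x = 0)
    (hnd' : ∀ x : A', (∀ a : A', x * a = 0 ∧ a * x = 0) → x = 0)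
    {r s : ℕ} (E : Fin r → Submodule F A) (E' : Fin s → Submodule F A')
    (hE : IsStdDecomp E) (hE' : IsStdDecomp E')
    (φ : A ≃ₗ[F] A') (hφ : ∀ x y : A, φ (x * y) = φ x * φ y) :
    r = s ∧ ∃ σ : Fin r ≃ Fin s, ∀ k, finrank F (E k) = finrank F (E' (σ k)) := by
  obtain ⟨hint, -, h1, hc, h2⟩ := hE
  obtain ⟨hint', -, h1', hc', h2'⟩ := hE'
  set f : A →ₗ[F] A' := (φ : A →ₗ[F] A') with hf
  set D : Fin r → Submodule F A' := fun k => (E k).map f with hD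
  have hsupE : ⨆ i, E i = ⊤ := hint.submodule_iSup_eq_top
  have hsupE' : ⨆ i, E' i = ⊤ := hint'.submodule_iSup_eq_top
  have hsupD : ⨆ i, D i = ⊤ := by
    rw [hD, ← Submodule.map_iSup, hsupE, Submodule.map_top, hf, LinearEquiv.range]
  have h1D : ∀ k, finrank F (mulSub (D k) (D k)) = 1 := by
    intro k
    rw [hD, mulSub_map φ hφ, LinearEquiv.finrank_map_eq]
    exact h1 k
  have hcD : ∀ j k, j ≠ k → mulSub (D j) (D k) = ⊥ := by
    intro j k hjk
    rw [hD, mulSub_map φ hφ, hc j k hjk, Submodule.map_bot]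
  have h2D : ∀ j k, j ≠ k → finrank F ↥(mulSub (D j) (D j) ⊔ mulSub (D k) (D k)) = 2 := by
    intro j k hjk
    rw [hD, mulSub_map φ hφ, mulSub_map φ hφ, ← Submodule.map_sup,
      LinearEquiv.finrank_map_eq]
    exact h2 j k hjk
  obtain ⟨σ, hσinj, hσ⟩ := std_unique hnd' hsupD h1D hcD h2D hsupE' h1' hc' h2'
  obtain ⟨τ, hτinj, hτ⟩ := std_unique hnd' hsupE' h1' hc' h2' hsupD h1D hcD h2D
  have hrs : r = s := by
    have h1 := Fintype.card_le_of_injective σ hσinj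
    have h2 := Fintype.card_le_of_injective τ hτinj
    simpa using le_antisymm (by simpa using h1) (by simpa using h2)
  have hbij : Function.Bijective σ := by
    rw [Fintype.bijective_iff_injective_and_card]
    exact ⟨hσinj, by simp [hrs]⟩
  refine ⟨hrs, Equiv.ofBijective σ hbij, ?_⟩
  intro k
  have : finrank F (E k) = finrank F (D k) := (LinearEquiv.finrank_map_eq φ (E k)).symm
  rw [this, hσ k]
  rfl
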